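/- The random graph model defined from an isolate-indifferent normalized graph parameter f with nonnegative Möbius transform by P(Gₙ = F) = f†(F) is consistent: the distribution of Gₙ with vertex n deleted equals the distribution of Gₙ₋₁. That is, for every graph F₀ on [n-1], ∑_{F on [n]: F∖{n}=F₀} f†(F) = f†(F₀). -/

import Mathlib

open scoped Classical

/-- The Möbius transform of a graph parameter. -/
noncomputable def mobiusT (f : ∀ n, SimpleGraph (Fin n) → ℝ) {n : ℕ} (F : SimpleGraph (Fin n)) : ℝ :=
  ∑ F' : SimpleGraph (Fin n),
    if F ≤ F' then
      (-1 : ℝ) ^ (Nat.card (F'.edgeSet \ F.edgeSet : Set (Sym2 (Fin n)))) * f n F'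
    else 0

/-- Invariance under isomorphisms (on the same number of vertices). -/
def IsoInvariant (f : ∀ n, SimpleGraph (Fin n) → ℝ) : Prop :=
  ∀ (n : ℕ) (G G' : SimpleGraph (Fin n)), Nonempty (G ≃g G') → f n G = f n G'

/-- Isolate-indifferent: invariant under isomorphism and under adding an isolated vertex. -/
def IsolateIndifferent (f : ∀ n, SimpleGraph (Fin n) → ℝ) : Prop :=
  IsoInvariant f ∧ ∀ (n : ℕ) (G : SimpleGraph (Fin n)),
    f (n + 1) (G.map Fin.castSuccEmb) = f n G

/-- Normalized: `f(K₀) = f(K₁) = 1`. -/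
def Normalized (f : ∀ n, SimpleGraph (Fin n) → ℝ) : Prop :=
  f 0 ⊥ = 1 ∧ f 1 ⊥ = 1

variable {n : ℕ}

/-- Extend a graph on `Fin n` to `Fin (n+1)` by joining the last vertex to `s`. -/
def gext (G : SimpleGraph (Fin n)) (s : Finset (Fin n)) : SimpleGraph (Fin (n + 1)) where
  Adj a b :=
    if ha : a = Fin.last n then
      if hb : b = Fin.last n then False else b.castPred hb ∈ s
    else
      if hb : b = Fin.last n then a.castPred ha ∈ s
      else G.Adj (a.castPred ha) (b.castPred hb)
  symm := by
    refine ⟨fun a b h => ?_⟩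
    split_ifs at h ⊢ <;> first | exact h | exact h.symm
  loopless := by
    refine ⟨fun a => ?_⟩
    beta_reduce
    split_ifs <;> simp_all

@[simp] lemma gext_adj_cast_cast (G : SimpleGraph (Fin n)) (s : Finset (Fin n)) (i j : Fin n) :
    (gext G s).Adj i.castSucc j.castSucc ↔ G.Adj i j := by
  simp [gext, Fin.castSucc_lt_last, (Fin.castSucc_lt_last i).ne, (Fin.castSucc_lt_last j).ne]

@[simp] lemma gext_adj_cast_last (G : SimpleGraph (Fin n)) (s : Finset (Fin n)) (i : Fin n) :
    (gext G s).Adj i.castSucc (Fin.last n) ↔ i ∈ s := by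
  simp [gext, (Fin.castSucc_lt_last i).ne]

@[simp] lemma gext_adj_last_cast (G : SimpleGraph (Fin n)) (s : Finset (Fin n)) (i : Fin n) :
    (gext G s).Adj (Fin.last n) i.castSucc ↔ i ∈ s := by
  simp [gext, (Fin.castSucc_lt_last i).ne]

lemma comap_gext (G : SimpleGraph (Fin n)) (s : Finset (Fin n)) :
    (gext G s).comap Fin.castSucc = G := by
  ext i j; simp [SimpleGraph.comap]

/-- Neighbors of the last vertex. -/
noncomputable def lastNbrs (F : SimpleGraph (Fin (n + 1))) : Finset (Fin n) :=
  Finset.univ.filter fun i => F.Adj i.castSucc (Fin.last n)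

@[simp] lemma mem_lastNbrs (F : SimpleGraph (Fin (n + 1))) (i : Fin n) :
    i ∈ lastNbrs F ↔ F.Adj i.castSucc (Fin.last n) := by simp [lastNbrs]

lemma gext_decomp (F : SimpleGraph (Fin (n + 1))) :
    gext (F.comap Fin.castSucc) (lastNbrs F) = F := by
  ext a b
  refine Fin.lastCases ?_ ?_ a <;> [skip; intro i] <;>
    refine Fin.lastCases ?_ ?_ b <;> [skip; intro j; skip; intro j] <;>
    simp [SimpleGraph.adj_comm]

lemma lastNbrs_gext (G : SimpleGraph (Fin n)) (s : Finset (Fin n)) :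
    lastNbrs (gext G s) = s := by
  ext i; simp

/-- Graphs on `Fin (n+1)` are pairs of a graph on `Fin n` and a neighbor set. -/
noncomputable def gextEquiv : SimpleGraph (Fin n) × Finset (Fin n) ≃ SimpleGraph (Fin (n + 1)) where
  toFun p := gext p.1 p.2
  invFun F := (F.comap Fin.castSucc, lastNbrs F)
  left_inv p := by simp [comap_gext, lastNbrs_gext]
  right_inv F := gext_decomp F

lemma gext_le_gext (G G' : SimpleGraph (Fin n)) (s s' : Finset (Fin n)) :
    gext G s ≤ gext G' s' ↔ G ≤ G' ∧ s ⊆ s' := by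
  constructor
  · intro h
    refine ⟨fun i j hij => ?_, fun i hi => ?_⟩
    · have := h ((gext_adj_cast_cast G s i j).2 hij); simpa using this
    · have := h ((gext_adj_cast_last G s i).2 hi); simpa using this
  · rintro ⟨hG, hs⟩ a b hab
    revert hab
    refine Fin.lastCases ?_ ?_ a <;> [skip; intro i] <;>
      refine Fin.lastCases ?_ ?_ b <;> [skip; intro j; skip; intro j] <;>
      simp only [gext_adj_cast_cast, gext_adj_cast_last, gext_adj_last_cast,
        SimpleGraph.irrefl] <;> intro h
    · exact h.elim
    · exact hs h
    · exact hs h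
    · exact hG h

lemma castSucc_last_inj : Function.Injective fun i : Fin n => s(Fin.castSucc i, Fin.last n) := by
  intro i j h
  simp only [Sym2.eq_iff] at h
  rcases h with ⟨h1, _⟩ | ⟨h1, h2⟩
  · exact Fin.castSucc_injective n h1
  · exact absurd h1 (Fin.castSucc_lt_last i).ne

lemma edgeSet_gext_diff (G G' : SimpleGraph (Fin n)) (s s' : Finset (Fin n)) :
    (gext G' s').edgeSet \ (gext G s).edgeSet =
      (Sym2.map Fin.castSucc '' (G'.edgeSet \ G.edgeSet)) ∪
      ((fun i => s(Fin.castSucc i, Fin.last n)) '' (↑(s' \ s) : Set (Fin n))) := by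
  ext e
  induction e using Sym2.ind with
  | _ a b =>
    refine Fin.lastCases ?_ ?_ a <;> [skip; intro i] <;>
      refine Fin.lastCases ?_ ?_ b <;> [skip; intro j; skip; intro j]
    · constructor
      · rintro ⟨h1, _⟩
        exact absurd h1 ((gext G' s').loopless.irrefl _)
      · rintro (⟨e₀, _, he⟩ | ⟨k, _, hke⟩)
        · exfalso
          induction e₀ using Sym2.ind with
          | _ u v =>
            simp only [Sym2.map_pair_eq, Sym2.eq_iff] at he
            rcases he with ⟨h1, _⟩ | ⟨h1, _⟩ <;> exact absurd h1 (Fin.castSucc_lt_last _).ne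
        · simp only [Sym2.eq_iff] at hke
          rcases hke with ⟨h1, _⟩ | ⟨h1, _⟩ <;> exact absurd h1 (Fin.castSucc_lt_last _).ne
    · simp only [Set.mem_diff, SimpleGraph.mem_edgeSet, gext_adj_last_cast]
      constructor
      · rintro ⟨h1, h2⟩
        refine Or.inr ⟨j, by simp [h1, h2], ?_⟩
        rw [Sym2.eq_swap]
      · rintro (⟨e₀, he₀, he⟩ | ⟨k, hk, hke⟩)
        · exfalso
          induction e₀ using Sym2.ind with
          | _ u v =>
            simp only [Sym2.map_pair_eq, Sym2.eq_iff] at he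
            rcases he with ⟨h1, _⟩ | ⟨_, h2⟩
            · exact absurd h1 (Fin.castSucc_lt_last u).ne
            · exact absurd h2 (Fin.castSucc_lt_last v).ne
        · simp only [Sym2.eq_iff] at hke
          rcases hke with ⟨h1, _⟩ | ⟨h2, _⟩
          · exact absurd h1 (Fin.castSucc_lt_last k).ne
          · have hkj : k = j := Fin.castSucc_injective n h2
            subst hkj
            simp only [Finset.coe_sdiff, Set.mem_diff, Finset.mem_coe] at hk
            exact ⟨hk.1, hk.2⟩
    · -- a = castSucc i, b = last
      simp only [Set.mem_diff, SimpleGraph.mem_edgeSet, gext_adj_cast_last]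
      constructor
      · rintro ⟨h1, h2⟩
        exact Or.inr ⟨i, by simp [h1, h2], rfl⟩
      · rintro (⟨e₀, he₀, he⟩ | ⟨k, hk, hke⟩)
        · exfalso
          induction e₀ using Sym2.ind with
          | _ u v =>
            simp only [Sym2.map_pair_eq, Sym2.eq_iff] at he
            rcases he with ⟨_, h2⟩ | ⟨h1, _⟩
            · exact absurd h2 (Fin.castSucc_lt_last v).ne
            · exact absurd h1 (Fin.castSucc_lt_last u).ne
        · simp only [Sym2.eq_iff] at hke
          rcases hke with ⟨h1, _⟩ | ⟨h1, _⟩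
          · have hki : k = i := Fin.castSucc_injective n h1
            subst hki
            simp only [Finset.coe_sdiff, Set.mem_diff, Finset.mem_coe] at hk
            exact ⟨hk.1, hk.2⟩
          · exact absurd h1 (Fin.castSucc_lt_last k).ne
    · -- both castSucc
      simp only [Set.mem_diff, SimpleGraph.mem_edgeSet, gext_adj_cast_cast]
      constructor
      · rintro ⟨h1, h2⟩
        exact Or.inl ⟨s(i, j), ⟨h1, h2⟩, by simp [Sym2.map_pair_eq]⟩
      · rintro (⟨e₀, he₀, he⟩ | ⟨k, hk, hke⟩)
        · induction e₀ using Sym2.ind with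
          | _ u v =>
            simp only [Sym2.map_pair_eq, Sym2.eq_iff] at he
            simp only [Set.mem_diff, SimpleGraph.mem_edgeSet] at he₀
            rcases he with ⟨h1, h2⟩ | ⟨h1, h2⟩
            · rw [← Fin.castSucc_injective n h1, ← Fin.castSucc_injective n h2]
              exact he₀
            · rw [← Fin.castSucc_injective n h1, ← Fin.castSucc_injective n h2]
              exact ⟨he₀.1.symm, fun h => he₀.2 h.symm⟩
        · exfalso
          simp only [Sym2.eq_iff] at hke
          rcases hke with ⟨_, h2⟩ | ⟨_, h2⟩
          · exact absurd h2.symm (Fin.castSucc_lt_last j).ne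
          · exact absurd h2.symm (Fin.castSucc_lt_last i).ne

lemma card_edge_diff (G G' : SimpleGraph (Fin n)) (s s' : Finset (Fin n)) :
    Nat.card ((gext G' s').edgeSet \ (gext G s).edgeSet : Set (Sym2 (Fin (n + 1)))) =
      Nat.card (G'.edgeSet \ G.edgeSet : Set (Sym2 (Fin n))) + (s' \ s).card := by
  rw [Nat.card_coe_set_eq, Nat.card_coe_set_eq, edgeSet_gext_diff]
  rw [Set.ncard_union_eq ?disj (Set.toFinite _) (Set.toFinite _)]
  · rw [Set.ncard_image_of_injective _ (Sym2.map.injective (Fin.castSucc_injective n)),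
      Set.ncard_image_of_injective _ castSucc_last_inj, Set.ncard_coe_finset]
  case disj =>
    rw [Set.disjoint_left]
    rintro e ⟨e₀, _, rfl⟩ ⟨k, _, hke⟩
    have : Fin.last n ∈ Sym2.map Fin.castSucc e₀ := by
      rw [← hke]; simp [Sym2.mem_iff]
    rw [Sym2.mem_map] at this
    obtain ⟨x, _, hx⟩ := this
    exact absurd hx (Fin.castSucc_lt_last x).ne

lemma gext_empty (G : SimpleGraph (Fin n)) : gext G ∅ = G.map Fin.castSuccEmb := by
  have hc : ∀ x : Fin n, (Fin.castSuccEmb : Fin n ↪ Fin (n + 1)) x = x.castSucc := fun _ => rfl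
  ext a b
  rw [SimpleGraph.map_adj]
  constructor
  · intro h
    revert h
    refine Fin.lastCases ?_ ?_ a <;> [skip; intro i] <;>
      refine Fin.lastCases ?_ ?_ b <;> [skip; intro j; skip; intro j] <;> intro h
    · exact absurd h ((gext G ∅).loopless.irrefl _)
    · simp at h
    · simp at h
    · exact ⟨i, j, by simpa using h, hc i, hc j⟩
  · rintro ⟨u, v, huv, rfl, rfl⟩
    simp only [hc, gext_adj_cast_cast]
    exact huv

lemma aux_sum {α : Type*} [DecidableEq α] (s' : Finset α) :
    (∑ s ∈ s'.powerset, ((-1 : ℝ)) ^ (s' \ s).card) = if s' = ∅ then 1 else 0 := by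
  have h1 : (∑ s ∈ s'.powerset, ((-1 : ℝ)) ^ (s' \ s).card)
      = ∑ s ∈ s'.powerset, ((-1 : ℝ)) ^ s.card := by
    refine Finset.sum_nbij' (fun s => s' \ s) (fun s => s' \ s) ?_ ?_ ?_ ?_ ?_
    · intro a _; exact Finset.mem_powerset.2 Finset.sdiff_subset
    · intro a _; exact Finset.mem_powerset.2 Finset.sdiff_subset
    · intro a ha; exact Finset.sdiff_sdiff_eq_self (Finset.mem_powerset.1 ha)
    · intro a ha; exact Finset.sdiff_sdiff_eq_self (Finset.mem_powerset.1 ha)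
    · intro a _; rfl
  rw [h1]
  have h2 := Finset.sum_powerset_neg_one_pow_card (x := s')
  have h3 : (∑ s ∈ s'.powerset, ((-1 : ℝ)) ^ s.card)
      = ((∑ s ∈ s'.powerset, ((-1 : ℤ)) ^ s.card : ℤ) : ℝ) := by push_cast; rfl
  rw [h3, h2]
  split_ifs <;> simp


/-- The random graph model `P(Gₙ = F) = f†(F)` built from an isolate-indifferent, normalized
graph parameter with nonnegative Möbius transform is consistent: deleting the last vertex of
a random graph on `[n+1]` gives the distribution on `[n]`. -/
theorem mobius_model_consistent (f : ∀ n, SimpleGraph (Fin n) → ℝ)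
    (hii : IsolateIndifferent f) (hnorm : Normalized f)
    (hmob : ∀ (n : ℕ) (F : SimpleGraph (Fin n)), 0 ≤ mobiusT f F)
    (n : ℕ) (F₀ : SimpleGraph (Fin n)) :
    ∑ F : SimpleGraph (Fin (n + 1)),
      (if SimpleGraph.comap Fin.castSucc F = F₀ then mobiusT f F else 0) = mobiusT f F₀ := by
  classical
  set a : SimpleGraph (Fin n) → ℕ :=
    fun G' => Nat.card (G'.edgeSet \ F₀.edgeSet : Set (Sym2 (Fin n))) with ha
  -- Step 1: reindex the outer sum by pairs and collapse the `comap` condition.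
  have step1 : (∑ F : SimpleGraph (Fin (n + 1)),
      (if SimpleGraph.comap Fin.castSucc F = F₀ then mobiusT f F else 0))
      = ∑ s : Finset (Fin n), mobiusT f (gext F₀ s) := by
    rw [← Equiv.sum_comp (gextEquiv (n := n))
      (fun F => if SimpleGraph.comap Fin.castSucc F = F₀ then mobiusT f F else 0),
      Fintype.sum_prod_type]
    have h1 : ∀ G : SimpleGraph (Fin n),
        (∑ s : Finset (Fin n),
          if SimpleGraph.comap Fin.castSucc (gextEquiv (G, s)) = F₀ then
            mobiusT f (gextEquiv (G, s)) else 0)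
        = if G = F₀ then (∑ s : Finset (Fin n), mobiusT f (gext G s)) else 0 := by
      intro G
      simp only [gextEquiv, Equiv.coe_fn_mk, comap_gext]
      split_ifs <;> simp
    rw [Finset.sum_congr rfl fun G _ => h1 G, Finset.sum_ite_eq' Finset.univ F₀]
    simp
  -- Step 2: expand each Möbius transform over pairs.
  have expand : ∀ s : Finset (Fin n), mobiusT f (gext F₀ s)
      = ∑ G' : SimpleGraph (Fin n), ∑ s' : Finset (Fin n),
          if F₀ ≤ G' ∧ s ⊆ s' then
            ((-1 : ℝ)) ^ (a G') * ((-1 : ℝ)) ^ ((s' \ s).card) * f (n + 1) (gext G' s')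
          else 0 := by
    intro s
    rw [mobiusT, ← Equiv.sum_comp (gextEquiv (n := n)), Fintype.sum_prod_type]
    refine Finset.sum_congr rfl fun G' _ => Finset.sum_congr rfl fun s' _ => ?_
    simp only [gextEquiv, Equiv.coe_fn_mk, gext_le_gext]
    split_ifs with h
    · rw [card_edge_diff, pow_add]
    · rfl
  rw [step1, Finset.sum_congr rfl fun s _ => expand s, Finset.sum_comm]
  rw [Finset.sum_congr rfl fun G' (_ : G' ∈ Finset.univ) => Finset.sum_comm]
  -- Step 3: collapse the inner sum over `s`.
  have inner : ∀ (G' : SimpleGraph (Fin n)) (s' : Finset (Fin n)),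
      (∑ s : Finset (Fin n),
        if F₀ ≤ G' ∧ s ⊆ s' then
          ((-1 : ℝ)) ^ (a G') * ((-1 : ℝ)) ^ ((s' \ s).card) * f (n + 1) (gext G' s')
        else 0)
      = if F₀ ≤ G' ∧ s' = ∅ then ((-1 : ℝ)) ^ (a G') * f (n + 1) (gext G' s') else 0 := by
    intro G' s'
    by_cases hF : F₀ ≤ G'
    · simp only [hF, true_and]
      have h2 : ∀ s : Finset (Fin n),
          (if s ⊆ s' then
            ((-1 : ℝ)) ^ (a G') * ((-1 : ℝ)) ^ ((s' \ s).card) * f (n + 1) (gext G' s')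
          else 0)
          = (((-1 : ℝ)) ^ (a G') * f (n + 1) (gext G' s')) *
              (if s ⊆ s' then ((-1 : ℝ)) ^ ((s' \ s).card) else 0) := by
        intro s; split_ifs <;> ring
      rw [Finset.sum_congr rfl fun s _ => h2 s, ← Finset.mul_sum]
      have hps : (∑ s : Finset (Fin n), if s ⊆ s' then ((-1 : ℝ)) ^ ((s' \ s).card) else 0)
          = ∑ s ∈ s'.powerset, ((-1 : ℝ)) ^ ((s' \ s).card) := by
        rw [← Finset.sum_filter]
        congr 1
        ext t; simp [Finset.mem_powerset]
      rw [hps, aux_sum]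
      split_ifs <;> ring
    · simp [hF]
  rw [Finset.sum_congr rfl fun G' (_ : G' ∈ Finset.univ) =>
    Finset.sum_congr rfl fun s' _ => inner G' s']
  -- Step 4: collapse the sum over `s'` and use isolate-indifference.
  have step4 : ∀ G' : SimpleGraph (Fin n),
      (∑ s' : Finset (Fin n),
        if F₀ ≤ G' ∧ s' = ∅ then ((-1 : ℝ)) ^ (a G') * f (n + 1) (gext G' s') else 0)
      = if F₀ ≤ G' then ((-1 : ℝ)) ^ (a G') * f n G' else 0 := by
    intro G'
    by_cases hF : F₀ ≤ G'
    · simp only [hF, true_and]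
      rw [Finset.sum_ite_eq' Finset.univ (∅ : Finset (Fin n))]
      simp only [Finset.mem_univ, if_true, gext_empty, hii.2]
    · simp [hF]
  rw [Finset.sum_congr rfl fun G' _ => step4 G', mobiusT]
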